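/- The number of equivalence classes of 2×κ binary matrices under row and column permutations equals (1/2)(Σ_{i=0}^{⌊κ/2⌋}(κ-2i+1) + binomial(κ+3,3)). -/

import Mathlib

/-- Two binary matrices are equivalent if one is obtained from the other by a row
permutation and a column permutation. -/
def matRel (γ κ : ℕ) (A B : Matrix (Fin γ) (Fin κ) Bool) : Prop :=
  ∃ (ρ : Equiv.Perm (Fin γ)) (σ : Equiv.Perm (Fin κ)), ∀ i j, B i j = A (ρ i) (σ j)

lemma exists_perm_of_fiber_card_eq {κ : ℕ} {C : Type*} [DecidableEq C] [Fintype C]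
    (f g : Fin κ → C)
    (h : ∀ c, (Finset.univ.filter (fun j => f j = c)).card
            = (Finset.univ.filter (fun j => g j = c)).card) :
    ∃ σ : Equiv.Perm (Fin κ), ∀ j, f j = g (σ j) := by
  have e : ∀ c : C, {x // f x = c} ≃ {x // g x = c} := fun c =>
    Fintype.equivOfCardEq (by
      rw [Fintype.card_subtype, Fintype.card_subtype]; exact h c)
  refine ⟨(Equiv.sigmaFiberEquiv f).symm.trans
    ((Equiv.sigmaCongrRight e).trans (Equiv.sigmaFiberEquiv g)), fun j => ?_⟩
  exact ((e (f j)) ⟨j, rfl⟩).prop.symm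

lemma card_filter_perm {n : ℕ} (σ : Equiv.Perm (Fin n)) (p : Fin n → Prop) [DecidablePred p] :
    (Finset.univ.filter fun j => p (σ j)).card = (Finset.univ.filter p).card := by
  rw [← Fintype.card_subtype, ← Fintype.card_subtype]
  exact Fintype.card_congr (σ.subtypeEquiv (fun j => Iff.rfl))

/-- the column of a 2-row matrix -/
def col {κ : ℕ} (A : Matrix (Fin 2) (Fin κ) Bool) (j : Fin κ) : Bool × Bool := (A 0 j, A 1 j)

/-- count of columns of each type -/
def cnt {κ : ℕ} (A : Matrix (Fin 2) (Fin κ) Bool) (c : Bool × Bool) : ℕ :=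
  (Finset.univ.filter (fun j => col A j = c)).card

lemma fin2_cases (i : Fin 2) : i = 0 ∨ i = 1 := by omega

lemma matRel_iff {κ : ℕ} (A B : Matrix (Fin 2) (Fin κ) Bool) :
    matRel 2 κ A B ↔ (cnt B = cnt A ∨ cnt B = fun c => cnt A c.swap) := by
  constructor
  · rintro ⟨ρ, σ, h⟩
    have hρ : (ρ 0 = 0 ∧ ρ 1 = 1) ∨ (ρ 0 = 1 ∧ ρ 1 = 0) := by
      rcases fin2_cases (ρ 0) with h0 | h0 <;> rcases fin2_cases (ρ 1) with h1 | h1 <;>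
        first
        | (left; exact ⟨h0, h1⟩)
        | (right; exact ⟨h0, h1⟩)
        | (exfalso; have := ρ.injective (h0.trans h1.symm); simp at this)
    rcases hρ with ⟨h0, h1⟩ | ⟨h0, h1⟩
    · left
      funext c
      unfold cnt
      rw [← card_filter_perm σ (fun j => col A j = c)]
      congr 1
      apply Finset.filter_congr
      intro j _
      simp only [col, h 0 j, h 1 j, h0, h1]
    · right
      funext c
      unfold cnt
      rw [← card_filter_perm σ (fun j => col A j = c.swap)]
      congr 1
      apply Finset.filter_congr
      intro j _
      simp only [col, h 0 j, h 1 j, h0, h1, eq_iff_iff]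
      constructor
      · rintro h'
        have : (B 0 j, B 1 j) = c := by rw [h 0 j, h 1 j, h0, h1]; exact h'
        rw [← this]; simp [h 0 j, h 1 j, h0, h1, Prod.swap]
      · rintro h'
        have h2 := congrArg Prod.swap h'
        simp only [Prod.swap_swap] at h2
        rw [← h2]; rfl
  · rintro (h | h)
    · obtain ⟨σ, hσ⟩ := exists_perm_of_fiber_card_eq (col B) (col A)
        (fun c => congrFun h c)
      refine ⟨1, σ, fun i j => ?_⟩
      rcases fin2_cases i with rfl | rfl
      · exact congrArg Prod.fst (hσ j)
      · exact congrArg Prod.snd (hσ j)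
    · have hfib : ∀ c, (Finset.univ.filter (fun j => col B j = c)).card
          = (Finset.univ.filter (fun j => (col A j).swap = c)).card := by
        intro c
        have : (Finset.univ.filter (fun j => (col A j).swap = c))
            = (Finset.univ.filter (fun j => col A j = c.swap)) := by
          apply Finset.filter_congr
          intro j _
          constructor
          · rintro rfl; simp
          · rintro h'; rw [h']; simp
        rw [this]
        exact congrFun h c
      obtain ⟨σ, hσ⟩ := exists_perm_of_fiber_card_eq (col B) (fun j => (col A j).swap) hfib
      refine ⟨Equiv.swap 0 1, σ, fun i j => ?_⟩
      rcases fin2_cases i with rfl | rfl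
      · rw [Equiv.swap_apply_left]
        exact congrArg Prod.fst (hσ j)
      · rw [Equiv.swap_apply_right]
        exact congrArg Prod.snd (hσ j)

/-- normal form of a count function -/
def nrm (P : Bool × Bool → ℕ) : Bool × Bool → ℕ :=
  if P (false, true) ≤ P (true, false) then P else fun c => P c.swap

lemma swap_eq_self {P : Bool × Bool → ℕ} (h : P (false, true) = P (true, false)) :
    (fun c => P c.swap) = P := by
  funext ⟨x, y⟩
  cases x <;> cases y <;> simp [Prod.swap] <;> omega

lemma nrm_eq_iff (P Q : Bool × Bool → ℕ) :
    nrm P = nrm Q ↔ (P = Q ∨ P = fun c => Q c.swap) := by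
  constructor
  · intro h
    unfold nrm at h
    split_ifs at h with h1 h2
    · exact Or.inl h
    · exact Or.inr h
    · right
      funext c
      have := congrFun h c.swap
      simpa using this
    · left
      funext c
      have := congrFun h c.swap
      simpa using this
  · rintro (rfl | rfl)
    · rfl
    · unfold nrm
      have e1 : (fun c => Q c.swap) (false, true) = Q (true, false) := rfl
      have e2 : (fun c => Q c.swap) (true, false) = Q (false, true) := rfl
      split_ifs with h1 h2
    -- h1 : Q tf ≤ Q ft, h2 : Q ft ≤ Q tf
      · rw [e1, e2] at h1
        exact swap_eq_self (le_antisymm h2 h1)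
      · rfl
      · funext c; simp
      · rw [e1, e2] at h1
        omega

/-- the complete invariant -/
def inv' {κ : ℕ} (A : Matrix (Fin 2) (Fin κ) Bool) : Bool × Bool → ℕ := nrm (cnt A)

lemma matRel_iff_inv {κ : ℕ} (A B : Matrix (Fin 2) (Fin κ) Bool) :
    matRel 2 κ A B ↔ inv' A = inv' B := by
  rw [matRel_iff, ← nrm_eq_iff]
  exact eq_comm

noncomputable def quotEquivRange (κ : ℕ) : Quot (matRel 2 κ) ≃ Set.range (inv' (κ := κ)) :=
  (Quot.congrRight (fun A B => (matRel_iff_inv A B))).trans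
    (Setoid.quotientKerEquivRange (inv' (κ := κ)))

lemma sum4 (P : Bool × Bool → ℕ) :
    ∑ c, P c = P (false,false) + P (false,true) + P (true,false) + P (true,true) := by
  simp [Fintype.sum_prod_type, Fintype.sum_bool]; ring

lemma sum_cnt {κ : ℕ} (A : Matrix (Fin 2) (Fin κ) Bool) : ∑ c, cnt A c = κ := by
  have := Finset.card_eq_sum_card_fiberwise
    (f := col A) (s := Finset.univ) (t := Finset.univ) (fun x _ => Finset.mem_univ _)
  simp only [Finset.card_univ, Fintype.card_fin] at this
  exact this.symm

lemma sum_swap (P : Bool × Bool → ℕ) : ∑ c : Bool × Bool, P c.swap = ∑ c, P c :=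
  Fintype.sum_equiv (Equiv.prodComm Bool Bool) _ _ (fun _ => rfl)

lemma sum_nrm (P : Bool × Bool → ℕ) : ∑ c, nrm P c = ∑ c, P c := by
  unfold nrm
  split_ifs
  · rfl
  · exact sum_swap P

lemma nrm_le (P : Bool × Bool → ℕ) : nrm P (false, true) ≤ nrm P (true, false) := by
  unfold nrm
  split_ifs with h
  · exact h
  · simpa [Prod.swap] using le_of_not_ge h

lemma card_filter_Ico {κ : ℕ} (a b : ℕ) (hb : b ≤ κ) :
    (Finset.univ.filter fun j : Fin κ => a ≤ ↑j ∧ ↑j < b).card = b - a := by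
  rw [← Nat.card_Ico a b]
  refine Finset.card_bij' (fun (j : Fin κ) _ => (j : ℕ))
    (fun n hn => (⟨n, lt_of_lt_of_le (Finset.mem_Ico.1 hn).2 hb⟩ : Fin κ)) ?_ ?_ ?_ ?_
  · intro j hj
    simp only [Finset.mem_filter] at hj
    exact Finset.mem_Ico.2 ⟨hj.2.1, hj.2.2⟩
  · intro n hn
    simp only [Finset.mem_filter, Finset.mem_univ, true_and]
    exact ⟨(Finset.mem_Ico.1 hn).1, (Finset.mem_Ico.1 hn).2⟩
  · intro j hj; rfl
  · intro n hn; rfl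

/-- the canonical finset of normalized count vectors -/
def Sfin (κ : ℕ) : Finset ((Bool × Bool) → ℕ) :=
  (Fintype.piFinset fun _ : Bool × Bool => Finset.range (κ+1)).filter
    (fun P => (∑ c, P c = κ) ∧ P (false,true) ≤ P (true,false))

lemma range_inv_eq (κ : ℕ) : Set.range (inv' (κ := κ)) = ↑(Sfin κ) := by
  ext P
  simp only [Set.mem_range, Finset.coe_filter, Set.mem_setOf_eq, Sfin, Finset.mem_filter,
    Fintype.mem_piFinset, Finset.mem_range]
  constructor
  · rintro ⟨A, rfl⟩
    have hsum : ∑ c, inv' A c = κ := by rw [inv', sum_nrm, sum_cnt]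
    refine ⟨fun c => ?_, hsum, nrm_le _⟩
    have : inv' A c ≤ ∑ c', inv' A c' :=
      Finset.single_le_sum (fun i _ => Nat.zero_le _) (Finset.mem_univ c)
    omega
  · rintro ⟨hlt, hsum, hle⟩
    -- construct a matrix with column counts P
    set a := P (false, false) with ha
    set b := P (false, true) with hb
    set c' := P (true, false) with hc
    set d := P (true, true) with hd
    have hsum4 : a + b + c' + d = κ := by rw [ha, hb, hc, hd, ← sum4]; exact hsum
    set g : Fin κ → Bool × Bool := fun j =>
      if (j : ℕ) < a then (false, false)
      else if (j : ℕ) < a + b then (false, true)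
      else if (j : ℕ) < a + b + c' then (true, false)
      else (true, true) with hg
    refine ⟨fun i j => if i = 0 then (g j).1 else (g j).2, ?_⟩
    have hcol : ∀ j, col (fun i j => if i = 0 then (g j).1 else (g j).2) j = g j := by
      intro j
      unfold col
      simp [Fin.one_eq_zero_iff]
    have hcnt : cnt (fun i j => if i = 0 then (g j).1 else (g j).2) = P := by
      funext c
      unfold cnt
      have : (Finset.univ.filter
          (fun j => col (fun i j => if i = 0 then (g j).1 else (g j).2) j = c))
          = (Finset.univ.filter (fun j => g j = c)) := by
        apply Finset.filter_congr
        intro j _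
        rw [hcol j]
      rw [this]
      rcases c with ⟨x, y⟩
      cases x <;> cases y
      · -- (false, false) : j < a
        have : (Finset.univ.filter (fun j : Fin κ => g j = (false, false)))
            = (Finset.univ.filter fun j : Fin κ => 0 ≤ (j : ℕ) ∧ (j : ℕ) < a) := by
          apply Finset.filter_congr
          intro j _
          simp only [hg]
          split_ifs with h1 h2 h3 <;> simp <;> omega
        rw [this, card_filter_Ico 0 a (by omega)]
        omega
      · have : (Finset.univ.filter (fun j : Fin κ => g j = (false, true)))
            = (Finset.univ.filter fun j : Fin κ => a ≤ (j : ℕ) ∧ (j : ℕ) < a + b) := by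
          apply Finset.filter_congr
          intro j _
          simp only [hg]
          split_ifs with h1 h2 h3 <;> simp <;> omega
        rw [this, card_filter_Ico a (a+b) (by omega)]
        omega
      · have : (Finset.univ.filter (fun j : Fin κ => g j = (true, false)))
            = (Finset.univ.filter fun j : Fin κ => a + b ≤ (j : ℕ) ∧ (j : ℕ) < a + b + c') := by
          apply Finset.filter_congr
          intro j _
          simp only [hg]
          split_ifs with h1 h2 h3 <;> simp <;> omega
        rw [this, card_filter_Ico (a+b) (a+b+c') (by omega)]
        omega
      · have : (Finset.univ.filter (fun j : Fin κ => g j = (true, true)))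
            = (Finset.univ.filter fun j : Fin κ => a + b + c' ≤ (j : ℕ) ∧ (j : ℕ) < κ) := by
          apply Finset.filter_congr
          intro j _
          simp only [hg]
          split_ifs with h1 h2 h3 <;> simp <;> omega
        rw [this, card_filter_Ico (a+b+c') κ (le_refl _)]
        omega
    show nrm (cnt _) = P; rw [hcnt]
    unfold nrm
    rw [if_pos hle]

def Stot (κ : ℕ) : Finset ((Bool × Bool) → ℕ) :=
  (Fintype.piFinset fun _ : Bool × Bool => Finset.range (κ+1)).filter
    (fun P => ∑ c, P c = κ)

lemma mem_Stot {κ : ℕ} {P : (Bool × Bool) → ℕ} : P ∈ Stot κ ↔ ∑ c, P c = κ := by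
  simp only [Stot, Finset.mem_filter, Fintype.mem_piFinset, Finset.mem_range,
    and_iff_right_iff_imp]
  intro hs c
  have : P c ≤ ∑ c', P c' :=
    Finset.single_le_sum (fun i _ => Nat.zero_le _) (Finset.mem_univ c)
  omega

lemma Sfin_eq (κ : ℕ) :
    Sfin κ = (Stot κ).filter (fun P => P (false,true) ≤ P (true,false)) := by
  ext P
  simp only [Sfin, Stot, Finset.mem_filter, Fintype.mem_piFinset, Finset.mem_range]
  tauto

lemma Stot_card (κ : ℕ) : (Stot κ).card = (κ + 3).choose 3 := by
  have h1 : Nat.card (Stot κ) = (Stot κ).card := Nat.card_eq_finsetCard _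
  have e : {x // x ∈ Stot κ} ≃ Sym (Bool × Bool) κ :=
    (Equiv.subtypeEquivRight (fun P => mem_Stot)).trans
      (Sym.equivNatSumOfFintype (Bool × Bool) κ).symm
  rw [← h1, Nat.card_congr e, Nat.card_eq_fintype_card, Sym.card_sym_eq_choose]
  have : Fintype.card (Bool × Bool) = 4 := by simp
  rw [this]
  have h2 : 4 + κ - 1 = κ + 3 := by omega
  rw [h2]
  have h3 : (κ + 3).choose (κ + 3 - 3) = (κ + 3).choose 3 := Nat.choose_symm (by omega)
  simpa using h3

lemma swap_mem_Stot {κ : ℕ} {P : (Bool × Bool) → ℕ} (h : P ∈ Stot κ) :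
    (fun c => P (Prod.swap c)) ∈ Stot κ := by
  rw [mem_Stot] at h ⊢
  rw [show (∑ c : Bool × Bool, P c.swap) = ∑ c, P c from sum_swap P]
  exact h

lemma card_lt_eq_card_gt (κ : ℕ) :
    ((Stot κ).filter (fun P => P (true,false) < P (false,true))).card
      = ((Stot κ).filter (fun P => P (false,true) < P (true,false))).card := by
  refine Finset.card_bij' (fun P _ => fun c => P (Prod.swap c))
    (fun P _ => fun c => P (Prod.swap c)) ?_ ?_ ?_ ?_
  · intro P hP
    rw [Finset.mem_filter] at hP ⊢
    exact ⟨swap_mem_Stot hP.1, hP.2⟩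
  · intro P hP
    rw [Finset.mem_filter] at hP ⊢
    exact ⟨swap_mem_Stot hP.1, hP.2⟩
  · intro P _; funext c; simp
  · intro P _; funext c; simp

lemma two_mul_Sfin (κ : ℕ) :
    2 * (Sfin κ).card = (Stot κ).card
      + ((Stot κ).filter (fun P => P (false,true) = P (true,false))).card := by
  classical
  set eqs := ((Stot κ).filter (fun P => P (false,true) = P (true,false)))
  set lts := ((Stot κ).filter (fun P => P (false,true) < P (true,false)))
  set gts := ((Stot κ).filter (fun P => P (true,false) < P (false,true)))
  have hsplit : (Sfin κ).card = eqs.card + lts.card := by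
    rw [Sfin_eq]
    have : (Stot κ).filter (fun P => P (false,true) ≤ P (true,false))
        = eqs ∪ lts := by
      rw [← Finset.filter_or]
      apply Finset.filter_congr
      intro P _
      omega
    rw [this, Finset.card_union_of_disjoint]
    rw [Finset.disjoint_filter]
    intro P _ h1
    omega
  have htot : (Stot κ).card = (Sfin κ).card + gts.card := by
    rw [Sfin_eq]
    rw [← Finset.card_filter_add_card_filter_not
      (s := Stot κ) (p := fun P => P (false,true) ≤ P (true,false))]
    congr 1
    have hfe : (Stot κ).filter (fun P => ¬ P (false,true) ≤ P (true,false)) = gts := by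
      apply Finset.filter_congr
      intro P _
      simp [not_le]
    rw [hfe]
  have hlg : lts.card = gts.card := (card_lt_eq_card_gt κ).symm
  omega

lemma Seq_card (κ : ℕ) :
    ((Stot κ).filter (fun P => P (false,true) = P (true,false))).card
      = ∑ i ∈ Finset.range (κ / 2 + 1), (κ - 2 * i + 1) := by
  classical
  set eqs := ((Stot κ).filter (fun P => P (false,true) = P (true,false))) with heqs
  have hmem : ∀ P ∈ eqs, P (false,true) ∈ Finset.range (κ / 2 + 1) := by
    intro P hP
    rw [heqs, Finset.mem_filter, mem_Stot] at hP
    obtain ⟨hs, he⟩ := hP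
    rw [sum4] at hs
    rw [Finset.mem_range]
    omega
  rw [Finset.card_eq_sum_card_fiberwise hmem]
  apply Finset.sum_congr rfl
  intro i hi
  rw [Finset.mem_range] at hi
  have h2i : 2 * i ≤ κ := by omega
  rw [← Finset.Nat.card_antidiagonal (κ - 2 * i)]
  refine Finset.card_bij' (fun P _ => (P (false,false), P (true,true)))
    (fun q _ => fun c => if c = (false,false) then q.1 else if c = (true,true) then q.2 else i)
    ?_ ?_ ?_ ?_
  · intro P hP
    rw [Finset.mem_filter, heqs, Finset.mem_filter, mem_Stot] at hP
    obtain ⟨⟨hs, he⟩, hft⟩ := hP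
    rw [sum4] at hs
    exact Finset.HasAntidiagonal.mem_antidiagonal.2 (by dsimp only; omega)
  · intro q hq
    replace hq := Finset.HasAntidiagonal.mem_antidiagonal.1 hq
    rw [Finset.mem_filter, heqs, Finset.mem_filter, mem_Stot]
    refine ⟨⟨?_, by simp⟩, by simp⟩
    rw [sum4]
    simp only [if_true, if_false]
    norm_num
    omega
  · intro P hP
    rw [Finset.mem_filter, heqs, Finset.mem_filter, mem_Stot] at hP
    obtain ⟨⟨hs, he⟩, hft⟩ := hP
    funext c
    rcases c with ⟨x, y⟩
    cases x <;> cases y <;> simp <;> omega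
  · intro q hq
    simp

/-- The number of equivalence classes of 2×κ binary matrices under row and
column permutations equals `(1/2)(Σ_{i=0}^{⌊κ/2⌋}(κ-2i+1) + binomial(κ+3,3))`
(stated multiplied through by 2). -/
theorem stmt2 (κ : ℕ) (hκ : 0 < κ) :
    2 * Nat.card (Quot (matRel 2 κ)) =
      (∑ i ∈ Finset.range (κ / 2 + 1), (κ - 2 * i + 1)) + (κ + 3).choose 3 := by
  have h1 : Nat.card (Quot (matRel 2 κ)) = (Sfin κ).card := by
    rw [Nat.card_congr (quotEquivRange κ), range_inv_eq κ, Nat.card_coe_set_eq,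
      Set.ncard_coe_finset]
  rw [h1, two_mul_Sfin κ, Stot_card κ, Seq_card κ]
  omega
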